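/- Let n ≥ 1, let r ∈ ℕ, and let M ∈ ℝ^{n×n} be symmetric with rank(Δ M − M Δᵀ) ≤ r and rank(Δᵀ M − M Δ) ≤ r, where Δ is the lower shift matrix. Let J be the exchange matrix and set N = M J − J M. Then: (i) Nᵀ = −N, so that i·N is a Hermitian complex matrix; (ii) N J = J Nᵀ (N is persymmetric); (iii) all diagonal entries of N are zero; and (iv) rank(N − Δ N Δᵀ) ≤ 2r + 2. -/

import Mathlib

open Matrix

/-- The lower shift matrix `Δ`, with ones just below the diagonal. -/
def shiftMatrix (R : Type*) [Zero R] [One R] (n : ℕ) : Matrix (Fin n) (Fin n) R :=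
  Matrix.of fun j k => if (j : ℕ) = (k : ℕ) + 1 then 1 else 0

/-- The exchange (backward identity) matrix `J`, with ones on the antidiagonal. -/
def exchangeMatrix (R : Type*) [Zero R] [One R] (n : ℕ) : Matrix (Fin n) (Fin n) R :=
  Matrix.of fun j k => if (j : ℕ) + (k : ℕ) + 1 = n then 1 else 0

namespace FoldAux

variable {n : ℕ}

/-- Index reversal on `Fin n`. -/
def rv (j : Fin n) : Fin n := ⟨n - 1 - (j : ℕ), by have := j.is_lt; omega⟩

lemma val_rv (j : Fin n) : ((rv j : Fin n) : ℕ) = n - 1 - (j : ℕ) := rfl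

lemma rank_add_le (A B : Matrix (Fin n) (Fin n) ℝ) :
    (A + B).rank ≤ A.rank + B.rank := by
  rw [Matrix.rank, Matrix.rank, Matrix.rank, Matrix.mulVecLin_add]
  have hle : LinearMap.range (A.mulVecLin + B.mulVecLin) ≤
      LinearMap.range A.mulVecLin ⊔ LinearMap.range B.mulVecLin := by
    rintro x ⟨y, rfl⟩
    exact Submodule.add_mem_sup ⟨y, rfl⟩ ⟨y, rfl⟩
  exact le_trans (Submodule.finrank_mono hle)
    (Submodule.finrank_add_le_finrank_add_finrank _ _)

lemma rank_sub_le (A B : Matrix (Fin n) (Fin n) ℝ) :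
    (A - B).rank ≤ A.rank + B.rank := by
  have h : A - B = A + (-1) * B := by noncomm_ring
  rw [h]
  exact le_trans (rank_add_le A _) (by
    have := Matrix.rank_mul_le_right (-1 : Matrix (Fin n) (Fin n) ℝ) B
    omega)

lemma rank_vecMulVec_le (w v : Fin n → ℝ) : (Matrix.vecMulVec w v).rank ≤ 1 := by
  rw [Matrix.vecMulVec_eq (Fin 1)]
  refine le_trans (Matrix.rank_mul_le_right _ _) ?_
  simpa using Matrix.rank_le_card_height (Matrix.replicateRow (Fin 1) v)

lemma exchange_transpose : (exchangeMatrix ℝ n)ᵀ = exchangeMatrix ℝ n := by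
  ext j k
  simp only [Matrix.transpose_apply, exchangeMatrix, Matrix.of_apply]
  exact if_congr (by omega) rfl rfl

lemma J_mul (X : Matrix (Fin n) (Fin n) ℝ) :
    exchangeMatrix ℝ n * X = X.submatrix rv id := by
  ext j k
  rw [Matrix.mul_apply]
  have hj := j.is_lt
  rw [Fintype.sum_eq_single (rv j) ?_]
  · simp only [exchangeMatrix, Matrix.of_apply]
    rw [if_pos (by rw [val_rv]; omega), one_mul, Matrix.submatrix_apply, id]
  · intro l hl
    have hlv : (l : ℕ) ≠ n - 1 - (j : ℕ) := fun h => hl (Fin.ext h)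
    simp only [exchangeMatrix, Matrix.of_apply]
    rw [if_neg (by omega), zero_mul]

lemma mul_J (X : Matrix (Fin n) (Fin n) ℝ) :
    X * exchangeMatrix ℝ n = X.submatrix id rv := by
  ext j k
  rw [Matrix.mul_apply]
  have hk := k.is_lt
  rw [Fintype.sum_eq_single (rv k) ?_]
  · simp only [exchangeMatrix, Matrix.of_apply]
    rw [if_pos (by rw [val_rv]; omega), mul_one, Matrix.submatrix_apply, id]
  · intro l hl
    have hlv : (l : ℕ) ≠ n - 1 - (k : ℕ) := fun h => hl (Fin.ext h)
    simp only [exchangeMatrix, Matrix.of_apply]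
    rw [if_neg (by omega), mul_zero]

lemma JJ : exchangeMatrix ℝ n * exchangeMatrix ℝ n = 1 := by
  rw [J_mul]
  ext j k
  have hj := j.is_lt
  have hk := k.is_lt
  simp only [Matrix.submatrix_apply, id, exchangeMatrix, Matrix.of_apply, val_rv,
    Matrix.one_apply]
  exact if_congr (by rw [Fin.ext_iff]; omega) rfl rfl

lemma DJ : shiftMatrix ℝ n * exchangeMatrix ℝ n
    = exchangeMatrix ℝ n * (shiftMatrix ℝ n)ᵀ := by
  rw [mul_J, J_mul]
  ext j k
  have hj := j.is_lt
  have hk := k.is_lt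
  simp only [Matrix.submatrix_apply, id, shiftMatrix, Matrix.of_apply,
    Matrix.transpose_apply, val_rv]
  exact if_congr (by omega) rfl rfl

/-- first standard basis vector indicator -/
def u0 : Fin n → ℝ := fun i => if (i : ℕ) = 0 then 1 else 0

/-- last standard basis vector indicator -/
def un : Fin n → ℝ := fun i => if (i : ℕ) + 1 = n then 1 else 0

lemma one_sub_DDt :
    (1 : Matrix (Fin n) (Fin n) ℝ) - shiftMatrix ℝ n * (shiftMatrix ℝ n)ᵀ
      = Matrix.vecMulVec u0 u0 := by
  ext j k
  have hj := j.is_lt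
  have hk := k.is_lt
  simp only [Matrix.sub_apply, Matrix.one_apply, Matrix.mul_apply, shiftMatrix,
    Matrix.of_apply, Matrix.transpose_apply, Matrix.vecMulVec_apply, u0]
  by_cases hjk : j = k
  · subst hjk
    by_cases hj0 : (j : ℕ) = 0
    · have hs : (∑ l : Fin n, (if (j : ℕ) = (l : ℕ) + 1 then (1:ℝ) else 0) *
          (if (j : ℕ) = (l : ℕ) + 1 then 1 else 0)) = 0 :=
        Finset.sum_eq_zero fun l _ => by rw [if_neg (by omega), zero_mul]
      rw [hs, if_pos rfl, if_pos hj0]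
      norm_num
    · have hs : (∑ l : Fin n, (if (j : ℕ) = (l : ℕ) + 1 then (1:ℝ) else 0) *
          (if (j : ℕ) = (l : ℕ) + 1 then 1 else 0)) = 1 := by
        rw [Fintype.sum_eq_single (⟨(j : ℕ) - 1, by omega⟩ : Fin n) ?_]
        · rw [if_pos (by simp; omega), one_mul]
        · intro l hl
          have hlv : (l : ℕ) ≠ (j : ℕ) - 1 := fun h => hl (Fin.ext h)
          rw [if_neg (by omega), zero_mul]
      rw [hs, if_pos rfl, if_neg hj0]
      norm_num
  · have hs : (∑ l : Fin n, (if (j : ℕ) = (l : ℕ) + 1 then (1:ℝ) else 0) *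
        (if (k : ℕ) = (l : ℕ) + 1 then 1 else 0)) = 0 := by
      refine Finset.sum_eq_zero fun l _ => ?_
      by_cases h1 : (j : ℕ) = (l : ℕ) + 1
      · rw [if_pos h1, if_neg (fun h2 => hjk (Fin.ext (by omega))), mul_zero]
      · rw [if_neg h1, zero_mul]
    rw [hs, if_neg hjk]
    have hz : (if (j : ℕ) = 0 then (1:ℝ) else 0) * (if (k : ℕ) = 0 then 1 else 0) = 0 := by
      by_cases hj0 : (j : ℕ) = 0
      · have hk0 : ¬((k : ℕ) = 0) := fun h => hjk (Fin.ext (by omega))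
        rw [if_neg hk0, mul_zero]
      · rw [if_neg hj0, zero_mul]
    rw [hz, sub_zero]

lemma one_sub_DtD :
    (1 : Matrix (Fin n) (Fin n) ℝ) - (shiftMatrix ℝ n)ᵀ * shiftMatrix ℝ n
      = Matrix.vecMulVec un un := by
  ext j k
  have hj := j.is_lt
  have hk := k.is_lt
  simp only [Matrix.sub_apply, Matrix.one_apply, Matrix.mul_apply, shiftMatrix,
    Matrix.of_apply, Matrix.transpose_apply, Matrix.vecMulVec_apply, un]
  by_cases hjk : j = k
  · subst hjk
    by_cases hj0 : (j : ℕ) + 1 = n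
    · have hs : (∑ l : Fin n, (if (l : ℕ) = (j : ℕ) + 1 then (1:ℝ) else 0) *
          (if (l : ℕ) = (j : ℕ) + 1 then 1 else 0)) = 0 :=
        Finset.sum_eq_zero fun l _ => by
          have hl := l.is_lt
          rw [if_neg (by omega), zero_mul]
      rw [hs, if_pos rfl, if_pos hj0]
      norm_num
    · have hs : (∑ l : Fin n, (if (l : ℕ) = (j : ℕ) + 1 then (1:ℝ) else 0) *
          (if (l : ℕ) = (j : ℕ) + 1 then 1 else 0)) = 1 := by
        rw [Fintype.sum_eq_single (⟨(j : ℕ) + 1, by omega⟩ : Fin n) ?_]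
        · rw [if_pos (by simp), one_mul]
        · intro l hl
          have hlv : (l : ℕ) ≠ (j : ℕ) + 1 := fun h => hl (Fin.ext h)
          rw [if_neg (by omega), zero_mul]
      rw [hs, if_pos rfl, if_neg hj0]
      norm_num
  · have hs : (∑ l : Fin n, (if (l : ℕ) = (j : ℕ) + 1 then (1:ℝ) else 0) *
        (if (l : ℕ) = (k : ℕ) + 1 then 1 else 0)) = 0 := by
      refine Finset.sum_eq_zero fun l _ => ?_
      by_cases h1 : (l : ℕ) = (j : ℕ) + 1
      · rw [if_pos h1, if_neg (fun h2 => hjk (Fin.ext (by omega))), mul_zero]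
      · rw [if_neg h1, zero_mul]
    rw [hs, if_neg hjk]
    have hz : (if (j : ℕ) + 1 = n then (1:ℝ) else 0) * (if (k : ℕ) + 1 = n then 1 else 0) = 0 := by
      by_cases hj0 : (j : ℕ) + 1 = n
      · have hk0 : ¬((k : ℕ) + 1 = n) := fun h => hjk (Fin.ext (by omega))
        rw [if_neg hk0, mul_zero]
      · rw [if_neg hj0, zero_mul]
    rw [hz, sub_zero]

end FoldAux

/-- Folding a symmetric matrix of Sylvester displacement rank `≤ r`:
`N = M J − J M` is skew-symmetric (so `i·N` is Hermitian), persymmetric,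
has zero diagonal, and Stein displacement rank at most `2r + 2`. -/
theorem fold_imag_part_persymmetric_displacement (n : ℕ) (hn : 1 ≤ n) (r : ℕ)
    (M : Matrix (Fin n) (Fin n) ℝ) (hsym : Mᵀ = M)
    (h1 : (shiftMatrix ℝ n * M - M * (shiftMatrix ℝ n)ᵀ).rank ≤ r)
    (h2 : ((shiftMatrix ℝ n)ᵀ * M - M * shiftMatrix ℝ n).rank ≤ r) :
    let N := M * exchangeMatrix ℝ n - exchangeMatrix ℝ n * M
    Nᵀ = -N ∧
    (Complex.I • (N.map (fun x => (x : ℂ)))).IsHermitian ∧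
    N * exchangeMatrix ℝ n = exchangeMatrix ℝ n * Nᵀ ∧
    (∀ j : Fin n, N j j = 0) ∧
    (N - shiftMatrix ℝ n * N * (shiftMatrix ℝ n)ᵀ).rank ≤ 2 * r + 2 := by
  intro N
  set Δ := shiftMatrix ℝ n with hΔdef
  set J := exchangeMatrix ℝ n with hJdef
  have hJT : Jᵀ = J := FoldAux.exchange_transpose
  have hNdef : N = M * J - J * M := rfl
  -- (i) skew-symmetry
  have hskew : Nᵀ = -N := by
    rw [hNdef, Matrix.transpose_sub, Matrix.transpose_mul, Matrix.transpose_mul,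
      hsym, hJT, neg_sub]
  refine ⟨hskew, ?_, ?_, ?_, ?_⟩
  -- (ii) Hermitian
  · have hentry : ∀ a b, N b a = -N a b := by
      intro a b
      have := congrFun (congrFun hskew a) b
      simpa [Matrix.transpose_apply, Matrix.neg_apply] using this
    show (Complex.I • (N.map (fun x => (x : ℂ))))ᴴ = _
    ext a b
    simp only [Matrix.conjTranspose_apply, Matrix.smul_apply, Matrix.map_apply,
      smul_eq_mul, star_mul', Complex.star_def, Complex.conj_I, Complex.conj_ofReal]
    rw [hentry a b]
    push_cast
    ring
  -- (iii) persymmetry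
  · rw [hskew, hNdef]
    have hJJ : J * J = 1 := FoldAux.JJ
    calc (M * J - J * M) * J = M * (J * J) - J * M * J := by noncomm_ring
      _ = M - J * M * J := by rw [hJJ, mul_one]
      _ = J * -(M * J - J * M) := by
          have : J * (J * M) = M := by rw [← mul_assoc, hJJ, one_mul]
          rw [mul_neg, mul_sub, this]; noncomm_ring
  -- (iv) zero diagonal
  · intro j
    have hMsym : ∀ a b, M a b = M b a := by
      intro a b
      have := congrFun (congrFun hsym b) a
      simpa [Matrix.transpose_apply] using this
    rw [hNdef]
    have h1' : (M * J) j j = M j (FoldAux.rv j) := by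
      rw [FoldAux.mul_J]; rfl
    have h2' : (J * M) j j = M (FoldAux.rv j) j := by
      rw [FoldAux.J_mul]; rfl
    rw [Matrix.sub_apply, h1', h2', hMsym j (FoldAux.rv j), sub_self]
  -- (v) displacement rank bound
  · have hDJ : Δ * J = J * Δᵀ := FoldAux.DJ
    set A := Δ * M - M * Δᵀ with hA
    set B := Δᵀ * M - M * Δ with hB
    set u := (FoldAux.u0 : Fin n → ℝ)
    set w := (FoldAux.un : Fin n → ℝ)
    have e1 : Matrix.vecMulVec u u * M = M - Δ * Δᵀ * M := by
      rw [← FoldAux.one_sub_DDt, sub_mul, one_mul]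
    have e2 : Matrix.vecMulVec w w * M = M - Δᵀ * Δ * M := by
      rw [← FoldAux.one_sub_DtD, sub_mul, one_mul]
    have key : N - Δ * N * Δᵀ
        = (Matrix.vecMulVec u u * M + Δ * B) * J
          - J * (Matrix.vecMulVec w w * M + Δᵀ * A) := by
      rw [hNdef, e1, e2, hA, hB]
      have t1 : Δ * ((M * J) * Δᵀ) = Δ * M * Δ * J := by
        rw [mul_assoc M J Δᵀ, ← hDJ]; noncomm_ring
      have t2 : Δ * ((J * M) * Δᵀ) = J * (Δᵀ * M * Δᵀ) := by
        rw [show Δ * ((J * M) * Δᵀ) = (Δ * J) * (M * Δᵀ) from by noncomm_ring, hDJ]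
        noncomm_ring
      have h3 : Δ * (M * J - J * M) * Δᵀ = Δ * M * Δ * J - J * (Δᵀ * M * Δᵀ) := by
        calc Δ * (M * J - J * M) * Δᵀ
            = Δ * ((M * J) * Δᵀ) - Δ * ((J * M) * Δᵀ) := by noncomm_ring
          _ = _ := by rw [t1, t2]
      rw [h3]
      noncomm_ring
    rw [key]
    have r1 : ((Matrix.vecMulVec u u * M + Δ * B) * J).rank ≤ 1 + r := by
      refine le_trans (Matrix.rank_mul_le_left _ _) ?_
      refine le_trans (FoldAux.rank_add_le _ _) ?_
      have ha : (Matrix.vecMulVec u u * M).rank ≤ 1 :=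
        le_trans (Matrix.rank_mul_le_left _ _) (FoldAux.rank_vecMulVec_le _ _)
      have hb : (Δ * B).rank ≤ r :=
        le_trans (Matrix.rank_mul_le_right _ _) h2
      omega
    have r2 : (J * (Matrix.vecMulVec w w * M + Δᵀ * A)).rank ≤ 1 + r := by
      refine le_trans (Matrix.rank_mul_le_right _ _) ?_
      refine le_trans (FoldAux.rank_add_le _ _) ?_
      have ha : (Matrix.vecMulVec w w * M).rank ≤ 1 :=
        le_trans (Matrix.rank_mul_le_left _ _) (FoldAux.rank_vecMulVec_le _ _)
      have hb : (Δᵀ * A).rank ≤ r :=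
        le_trans (Matrix.rank_mul_le_right _ _) h1
      omega
    have := FoldAux.rank_sub_le ((Matrix.vecMulVec u u * M + Δ * B) * J)
      (J * (Matrix.vecMulVec w w * M + Δᵀ * A))
    omega
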